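/- Let 𝒢 be a simple graph on a vertex set V, and let C(𝒢) be the collection of all cliques of 𝒢, i.e., subsets of V whose elements are pairwise adjacent (including the empty set and all singletons). For v ∈ V let v₊ = {c ∈ C(𝒢) : v ∈ c}. Then the family {v₊ : v ∈ V} is a 2-independent subset of the powerset Boolean algebra of C(𝒢). -/

import Mathlib

universe u

/-- `X` is `n`-independent: `⊥ ∉ X`, (⊥1) no nonempty finite `F ⊆ X` has `sup F = ⊤`,
(⊥2ₙ) any nonempty finite `F ⊆ X` with `inf F = ⊥` has a subset of size `≤ n` with
infimum `⊥`, and (⊥3) if `⊥ ≠ inf F ≤ sup G` then `F ∩ G ≠ ∅`. -/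
def NIndependent {α : Type u} [BooleanAlgebra α] (n : ℕ) (X : Set α) : Prop :=
  ⊥ ∉ X ∧
  (∀ F : Finset α, ↑F ⊆ X → F.Nonempty → F.sup id ≠ ⊤) ∧
  (∀ F : Finset α, ↑F ⊆ X → F.Nonempty → F.inf id = ⊥ →
    ∃ F' ⊆ F, F'.card ≤ n ∧ F'.inf id = ⊥) ∧
  (∀ F G : Finset α, ↑F ⊆ X → ↑G ⊆ X → F.Nonempty → G.Nonempty →
    F.inf id ≠ ⊥ → F.inf id ≤ G.sup id → ((F : Set α) ∩ (G : Set α)).Nonempty)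

/-- The set of cliques of a simple graph `G` (sets of pairwise adjacent vertices,
including `∅` and singletons). -/
def Clique {V : Type u} (G : SimpleGraph V) : Type u := {s : Set V // G.IsClique s}

/-- `v₊` is the set of cliques of `G` containing the vertex `v`. -/
def vPlus {V : Type u} (G : SimpleGraph V) (v : V) : Set (Clique G) :=
  {c : Clique G | v ∈ c.1}

/-- The family `{v₊ : v ∈ V}` is `2`-independent in the powerset Boolean algebra of the
set of cliques of `G`. -/
theorem vPlus_twoIndependent {V : Type u} (G : SimpleGraph V) :
    NIndependent 2 (Set.range (vPlus G)) := by
  classical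
  have memsup : ∀ (F : Finset (Set (Clique G))) (c : Clique G),
      c ∈ F.sup id ↔ ∃ f ∈ F, c ∈ f := by
    intro F c
    simp [Finset.sup_set_eq_biUnion]
  have meminf : ∀ (F : Finset (Set (Clique G))) (c : Clique G),
      c ∈ F.inf id ↔ ∀ f ∈ F, c ∈ f := by
    intro F c
    simp [Finset.inf_set_eq_iInter]
  refine ⟨?_, ?_, ?_, ?_⟩
  · rintro ⟨v, hv⟩
    have : (⟨{v}, G.isClique_singleton v⟩ : Clique G) ∈ vPlus G v := by
      show v ∈ ({v} : Set V); rfl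
    rw [hv] at this
    exact this
  · intro F hF _ htop
    have : (⟨∅, G.isClique_empty⟩ : Clique G) ∈ F.sup id := by
      rw [htop]; trivial
    obtain ⟨f, hf, hcf⟩ := (memsup F _).1 this
    obtain ⟨v, rfl⟩ := hF hf
    exact hcf
  · intro F hF hne hinf
    set S : Set V := {v | vPlus G v ∈ F} with hS
    have hnc : ¬ G.IsClique S := by
      intro hc
      have : (⟨S, hc⟩ : Clique G) ∈ F.inf id := by
        refine (meminf _ _).2 ?_
        intro f hf
        obtain ⟨v, rfl⟩ := hF hf
        exact hf
      rw [hinf] at this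
      exact this
    rw [SimpleGraph.isClique_iff, Set.Pairwise] at hnc
    push_neg at hnc
    obtain ⟨x, hx, y, hy, hxy, hnadj⟩ := hnc
    refine ⟨{vPlus G x, vPlus G y}, ?_, ?_, ?_⟩
    · intro f hf
      rcases Finset.mem_insert.1 hf with rfl | hf
      · exact hx
      · rw [Finset.mem_singleton.1 hf]; exact hy
    · exact Finset.card_insert_le _ _ |>.trans (by simp)
    · rw [Set.bot_eq_empty, Set.eq_empty_iff_forall_notMem]
      intro c hc
      rw [meminf] at hc
      have hcx : x ∈ c.1 := hc _ (Finset.mem_insert_self _ _)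
      have hcy : y ∈ c.1 := hc _ (Finset.mem_insert_of_mem (Finset.mem_singleton_self _))
      exact hnadj (c.2 hcx hcy hxy)
  · intro F Gs hF hG hFne _ hinf hle
    set S : Set V := {v | vPlus G v ∈ F} with hS
    have hc : G.IsClique S := by
      by_contra hnc
      apply hinf
      rw [Set.bot_eq_empty, Set.eq_empty_iff_forall_notMem]
      intro c hcm
      apply hnc
      intro x hx y hy hxy
      rw [meminf] at hcm
      exact c.2 (hcm _ hx) (hcm _ hy) hxy
    have hmem : (⟨S, hc⟩ : Clique G) ∈ F.inf id := by
      refine (meminf _ _).2 ?_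
      intro f hf
      obtain ⟨v, rfl⟩ := hF hf
      exact hf
    have := hle hmem
    obtain ⟨g, hg, hcg⟩ := (memsup Gs _).1 this
    obtain ⟨w, rfl⟩ := hG hg
    exact ⟨vPlus G w, hcg, hg⟩
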